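/- arXiv:math/0207295 — 5 statements merged into one kernel-verified Lean document; each statement's English description precedes it below -/
import Mathlib

section
/- Let B be a Noetherian domain and P a finitely generated projective right B-module that is a generator of the category of right B-modules. If B' = End_B(P) is also a domain, then P is isomorphic as a right B-module to a right ideal of B. -/
section Aux

variable {B : Type*} [Ring B] [IsDomain B]
    {P : Type*} [AddCommGroup P] [Module Bᵐᵒᵖ P] [Module.Projective Bᵐᵒᵖ P]

/-- Torsion-freeness of a projective module over a domain. -/
lemma aux_tf (c : Bᵐᵒᵖ) (p : P) (h : c • p = 0) : c = 0 ∨ p = 0 := by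
  obtain ⟨s, hs⟩ := Module.projective_def.mp (inferInstance : Module.Projective Bᵐᵒᵖ P)
  have hsp : c • s p = 0 := by rw [← map_smul, h, map_zero]
  rcases smul_eq_zero.mp hsp with hc | hp
  · exact Or.inl hc
  · right
    have := hs p
    rw [hp, map_zero] at this
    exact this.symm

/-- The endomorphism `x ↦ op (ψ x) • q` of `P`. -/
def aux_f (ψ : P →ₗ[Bᵐᵒᵖ] B) (q : P) : Module.End Bᵐᵒᵖ P where
  toFun x := MulOpposite.op (ψ x) • q
  map_add' x y := by simp only [map_add, MulOpposite.op_add, add_smul]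
  map_smul' c x := by
    simp only [map_smul, RingHom.id_apply]
    have : MulOpposite.op (c • ψ x) = c * MulOpposite.op (ψ x) := by
      induction c using MulOpposite.rec'
      simp [MulOpposite.smul_eq_mul_unop]
    rw [this, mul_smul]

end Aux

/-- let `B` be a Noetherian domain and `P` a finitely generated projective
right `B`-module (formalized as a module over `Bᵐᵒᵖ`) which is a generator of the
category of right `B`-modules (its trace ideal is all of `B`). If `B' = End_B(P)` is a
domain, then `P` is isomorphic as a right `B`-module to a right ideal of `B`. -/
theorem stmt0 (B : Type*) [Ring B] [IsDomain B]
    [IsNoetherianRing B] [IsNoetherianRing Bᵐᵒᵖ]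
    (P : Type*) [AddCommGroup P] [Module Bᵐᵒᵖ P]
    [Module.Finite Bᵐᵒᵖ P] [Module.Projective Bᵐᵒᵖ P]
    (hgen : Submodule.span Bᵐᵒᵖ {x : B | ∃ (θ : P →ₗ[Bᵐᵒᵖ] B) (p : P), θ p = x}
      = (⊤ : Submodule Bᵐᵒᵖ B))
    [IsDomain (Module.End Bᵐᵒᵖ P)] :
    ∃ I : Submodule Bᵐᵒᵖ B, Nonempty (P ≃ₗ[Bᵐᵒᵖ] I) := by
  -- there is a nonzero functional
  obtain ⟨θ, q, hq⟩ : ∃ (θ : P →ₗ[Bᵐᵒᵖ] B) (q : P), θ q ≠ 0 := by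
    by_contra h
    push_neg at h
    have hle : Submodule.span Bᵐᵒᵖ {x : B | ∃ (θ : P →ₗ[Bᵐᵒᵖ] B) (p : P), θ p = x}
        ≤ (⊥ : Submodule Bᵐᵒᵖ B) := by
      rw [Submodule.span_le]
      rintro x ⟨θ, p, rfl⟩
      simp [h θ p]
    rw [hgen] at hle
    exact one_ne_zero ((Submodule.mem_bot _).mp (hle Submodule.mem_top))
  have hq0 : q ≠ 0 := fun h => hq (by rw [h, map_zero])
  have hfq : aux_f θ q ≠ 0 := by
    intro h
    have h2 : MulOpposite.op (θ q) • q = 0 := congrFun (congrArg DFunLike.coe h) q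
    rcases aux_tf _ _ h2 with hc | hp
    · exact hq (by simpa using congrArg MulOpposite.unop hc)
    · exact hq0 hp
  -- θ is injective
  have hinj : Function.Injective θ := by
    rw [← LinearMap.ker_eq_bot, eq_bot_iff]
    intro p hp
    have hθp : θ p = 0 := hp
    have key : ∀ (ψ : P →ₗ[Bᵐᵒᵖ] B) (x : P), MulOpposite.op (ψ x) • p = 0 := by
      intro ψ x
      have hcomp : aux_f θ q * aux_f ψ p = 0 := by
        ext z
        show MulOpposite.op (θ (MulOpposite.op (ψ z) • p)) • q = 0
        rw [map_smul, MulOpposite.smul_eq_mul_unop]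
        simp [hθp]
      rcases mul_eq_zero.mp hcomp with h1 | h2
      · exact absurd h1 hfq
      · exact congrFun (congrArg DFunLike.coe h2) x
    let T : Submodule Bᵐᵒᵖ B :=
      { carrier := {b : B | MulOpposite.op b • p = 0}
        add_mem' := fun {a b} ha hb => by
          simp only [Set.mem_setOf_eq, MulOpposite.op_add, add_smul] at *
          rw [ha, hb, add_zero]
        zero_mem' := by simp
        smul_mem' := fun c b hb => by
          simp only [Set.mem_setOf_eq] at *
          have : MulOpposite.op (c • b) = c * MulOpposite.op b := by
            induction c using MulOpposite.rec'
            simp [MulOpposite.smul_eq_mul_unop]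
          rw [this, mul_smul, hb, smul_zero] }
    have hle : Submodule.span Bᵐᵒᵖ {x : B | ∃ (θ : P →ₗ[Bᵐᵒᵖ] B) (p : P), θ p = x} ≤ T := by
      rw [Submodule.span_le]
      rintro x ⟨ψ, y, rfl⟩
      exact key ψ y
    rw [hgen] at hle
    have h1 : MulOpposite.op (1 : B) • p = 0 := hle Submodule.mem_top
    simpa using h1
  exact ⟨LinearMap.range θ, ⟨LinearEquiv.ofInjective θ hinj⟩⟩
end

section
/- Let n ≥ 2 and let μ_1, μ_2, ..., μ_r be nonnegative integers and k, l integers with 0 ≤ l ≤ k ≤ n-1, such that (n-1-k) + (k-l) + μ_1 + ... + μ_r = n-1 and Σ_{i=1}^r i·μ_i = n. Then the multinomial coefficient (n-1)! / ((n-1-k)! (k-l)! μ_1! μ_2! ··· μ_r!) is an integer divisible by n-1. -/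
open Finset

lemma stmt5_key {α : Type*} [DecidableEq α] (s : Finset α) (f : α → ℕ) {j : α} (hj : j ∈ s) :
    (∑ i ∈ s, f i) ∣ f j * Nat.multinomial s f := by
  rcases Nat.eq_zero_or_pos (f j) with h0 | hpos
  · simp [h0]
  have hspos : 0 < ∑ i ∈ s, f i :=
    lt_of_lt_of_le hpos (Finset.single_le_sum (fun i _ => Nat.zero_le _) hj)
  set g := Function.update f j (f j - 1) with hg
  have hge : ∀ i ∈ s.erase j, g i = f i := fun i hi =>
    Function.update_of_ne (Finset.ne_of_mem_erase hi) _ _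
  have hgj : g j = f j - 1 := Function.update_self _ _ _
  have herase : ∏ i ∈ s.erase j, (g i).factorial = ∏ i ∈ s.erase j, (f i).factorial :=
    Finset.prod_congr rfl fun i hi => by rw [hge i hi]
  have hsum : ∑ i ∈ s, g i = (∑ i ∈ s, f i) - 1 := by
    have e1 : ∑ i ∈ s, g i = g j + ∑ i ∈ s.erase j, f i := by
      rw [← Finset.add_sum_erase _ g hj, Finset.sum_congr rfl hge]
    have e2 : ∑ i ∈ s, f i = f j + ∑ i ∈ s.erase j, f i := (Finset.add_sum_erase _ f hj).symm
    omega
  have hT : ∏ i ∈ s, (f i).factorial = f j * ∏ i ∈ s, (g i).factorial := by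
    rw [← Finset.mul_prod_erase _ (fun i => (f i).factorial) hj,
      ← Finset.mul_prod_erase _ (fun i => (g i).factorial) hj, herase, hgj,
      ← Nat.mul_factorial_pred hpos.ne', mul_assoc]
  have hTpos : 0 < ∏ i ∈ s, (f i).factorial :=
    Finset.prod_pos fun i _ => Nat.factorial_pos _
  have hkey : f j * Nat.multinomial s f = (∑ i ∈ s, f i) * Nat.multinomial s g := by
    apply Nat.eq_of_mul_eq_mul_left hTpos
    calc (∏ i ∈ s, (f i).factorial) * (f j * Nat.multinomial s f)
        = f j * ((∏ i ∈ s, (f i).factorial) * Nat.multinomial s f) := by ring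
      _ = f j * (∑ i ∈ s, f i).factorial := by rw [Nat.multinomial_spec]
      _ = f j * ((∑ i ∈ s, f i) * ((∑ i ∈ s, f i) - 1).factorial) := by
          rw [Nat.mul_factorial_pred hspos.ne']
      _ = (∑ i ∈ s, f i) * (f j * (∑ i ∈ s, g i).factorial) := by rw [hsum]; ring
      _ = (∑ i ∈ s, f i) * (f j * ((∏ i ∈ s, (g i).factorial) * Nat.multinomial s g)) := by
          rw [Nat.multinomial_spec]
      _ = (∏ i ∈ s, (f i).factorial) * ((∑ i ∈ s, f i) * Nat.multinomial s g) := by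
          rw [hT]; ring
  exact ⟨Nat.multinomial s g, hkey⟩

/-- given `n ≥ 2`, integers `0 ≤ l ≤ k ≤ n-1` and nonnegative integers
`μ_1,…,μ_r` with `(n-1-k) + (k-l) + Σ μ_i = n-1` and `Σ i·μ_i = n`, the multinomial
coefficient `(n-1)!/((n-1-k)!(k-l)!μ_1!⋯μ_r!)` is an integer divisible by `n-1`
(expressed as: `(n-1)·(n-1-k)!(k-l)!∏ μ_i!` divides `(n-1)!`). -/
theorem stmt5 (n : ℕ) (hn : 2 ≤ n) (k l r : ℕ) (hlk : l ≤ k) (hk : k ≤ n - 1)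
    (μ : Fin r → ℕ)
    (h1 : (n - 1 - k) + (k - l) + ∑ i, μ i = n - 1)
    (h2 : ∑ i : Fin r, ((i : ℕ) + 1) * μ i = n) :
    ((n - 1) * ((n - 1 - k).factorial * (k - l).factorial * ∏ i, (μ i).factorial))
      ∣ (n - 1).factorial := by
  set f : Fin (r + 2) → ℕ := Fin.cons (n - 1 - k) (Fin.cons (k - l) μ) with hf
  have hsumf : ∑ i, f i = n - 1 := by
    rw [hf, Fin.sum_cons, Fin.sum_cons]; omega
  have hprodf : ∏ i, (f i).factorial =
      (n - 1 - k).factorial * (k - l).factorial * ∏ i, (μ i).factorial := by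
    simp [hf, Fin.prod_univ_succ, mul_assoc]
  set M := Nat.multinomial Finset.univ f with hM
  have hdvd : ∀ j : Fin (r + 2), (n - 1) ∣ f j * M := by
    intro j
    rw [← hsumf]
    exact stmt5_key Finset.univ f (Finset.mem_univ j)
  set d := Finset.univ.gcd f with hd
  have hdM : (n - 1) ∣ d * M := by
    have h := Finset.dvd_gcd (fun j (_ : j ∈ (Finset.univ : Finset (Fin (r+2)))) => hdvd j)
    rwa [Finset.gcd_mul_right, normalize_eq] at h
  have hdn1 : d ∣ n - 1 := by
    rw [← hsumf]
    exact Finset.dvd_sum fun i _ => Finset.gcd_dvd (Finset.mem_univ i)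
  have hdn : d ∣ n := by
    rw [← h2]
    refine Finset.dvd_sum fun i _ => Dvd.dvd.mul_left ?_ _
    have : μ i = f i.succ.succ := by simp [hf]
    rw [this]
    exact Finset.gcd_dvd (Finset.mem_univ _)
  have hd1 : d = 1 := by
    have := Nat.dvd_sub hdn hdn1
    have h1' : n - (n - 1) = 1 := by omega
    rw [h1'] at this
    exact Nat.dvd_one.mp this
  rw [hd1, one_mul] at hdM
  obtain ⟨c, hc⟩ := hdM
  have hspec := Nat.multinomial_spec Finset.univ f
  rw [hsumf, hprodf, ← hM, hc] at hspec
  exact ⟨c, by rw [← hspec]; ring⟩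
end

section
/- For coprime nonnegative integers a_0, ..., a_r with a_0 + ... + a_r = m (m ≥ 1), the multinomial coefficient m!/(a_0!···a_r!) is divisible by m. -/
open Nat

lemma aux_dvd_mul_multinomial {r m : ℕ} (a : Fin (r + 1) → ℕ)
    (hsum : ∑ i, a i = m) (i : Fin (r + 1)) :
    m ∣ a i * Nat.multinomial Finset.univ a := by
  rcases Nat.eq_zero_or_pos (a i) with h0 | hpos
  · simp [h0]
  · set b : Fin (r + 1) → ℕ := Function.update a i (a i - 1) with hb
    have hsumb : ∑ j, b j = m - 1 := by
      have h1 := Finset.sum_update_of_mem (Finset.mem_univ i) a (a i - 1)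
      have h2 : a i + ∑ j ∈ Finset.univ \ {i}, a j = m := by
        rw [← hsum, Finset.sdiff_singleton_eq_erase, Finset.add_sum_erase _ _ (Finset.mem_univ i)]
      rw [hb, h1]
      omega
    have hm1 : 1 ≤ m := by
      have : a i ≤ ∑ j, a j := Finset.single_le_sum (fun _ _ => Nat.zero_le _) (Finset.mem_univ i)
      omega
    have key : a i * Nat.multinomial Finset.univ a = m * Nat.multinomial Finset.univ b := by
      have hprodpos : 0 < ∏ j, (a j)! := Finset.prod_pos fun j _ => Nat.factorial_pos _
      apply Nat.eq_of_mul_eq_mul_left hprodpos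
      have spec_a := Nat.multinomial_spec Finset.univ a
      have spec_b := Nat.multinomial_spec Finset.univ b
      rw [hsum] at spec_a
      rw [hsumb] at spec_b
      have hfac : ∏ j, (a j)! = a i * ∏ j, (b j)! := by
        rw [← Finset.mul_prod_erase Finset.univ (fun j => (a j)!) (Finset.mem_univ i),
            ← Finset.mul_prod_erase Finset.univ (fun j => (b j)!) (Finset.mem_univ i)]
        have h1 : (a i)! = a i * (b i)! := by
          rw [hb, Function.update_self]
          rw [← Nat.succ_pred_eq_of_pos hpos, Nat.factorial_succ]
          simp [Nat.succ_pred_eq_of_pos hpos]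
        have h2 : ∏ j ∈ Finset.univ.erase i, (a j)! = ∏ j ∈ Finset.univ.erase i, (b j)! :=
          Finset.prod_congr rfl fun j hj => by
            rw [hb, Function.update_of_ne (Finset.ne_of_mem_erase hj)]
        rw [h1, h2]; ring
      calc (∏ j, (a j)!) * (a i * Nat.multinomial Finset.univ a)
          = a i * ((∏ j, (a j)!) * Nat.multinomial Finset.univ a) := by ring
        _ = a i * m ! := by rw [spec_a]
        _ = a i * (m * (m - 1)!) := by
            rw [← Nat.succ_pred_eq_of_pos hm1, Nat.factorial_succ]
            simp [Nat.succ_pred_eq_of_pos hm1]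
        _ = a i * (m * ((∏ j, (b j)!) * Nat.multinomial Finset.univ b)) := by rw [spec_b]
        _ = (a i * ∏ j, (b j)!) * (m * Nat.multinomial Finset.univ b) := by ring
        _ = (∏ j, (a j)!) * (m * Nat.multinomial Finset.univ b) := by rw [← hfac]
    exact ⟨Nat.multinomial Finset.univ b, key⟩

/-- for coprime nonnegative integers `a_0,…,a_r` with sum `m ≥ 1`,
the multinomial coefficient `m!/(a_0!⋯a_r!)` is divisible by `m`. -/
theorem stmt7 (m r : ℕ) (hm : 1 ≤ m) (a : Fin (r + 1) → ℕ)
    (hgcd : Finset.univ.gcd a = 1) (hsum : ∑ i, a i = m) :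
    m ∣ Nat.multinomial Finset.univ a := by
  have h : m ∣ Finset.univ.gcd (fun i => a i * Nat.multinomial Finset.univ a) :=
    Finset.dvd_gcd fun i _ => aux_dvd_mul_multinomial a hsum i
  rw [Finset.gcd_mul_right, hgcd, one_mul] at h
  simpa using h
end

section
/- Let n ≥ 3, let f(x) = (x+1)(x+2)···(x+n-1) ∈ ℚ[x], and suppose g_1,...,g_{n-1} ∈ ℚ[x] are nonzero polynomials of degree ≤ n-2 such that f/g_{k+1} - f/g_k = 1 identically in ℚ(x) for k = 1,...,n-2. Then there exist q ∈ ℚ× and x_1 ∈ {-1,...,1-n} with f(x)/g_k(x) = (x - x_k)/q where x_k = x_1 + (1-k)q for all k; moreover either (q = 1 and x_k = -k for all k) or (q = -1 and x_k = k-n for all k). -/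
open Polynomial

/-- let `n ≥ 3`, `f(x) = (x+1)⋯(x+n-1) ∈ ℚ[x]`, and `g_1,…,g_{n-1}`
nonzero rational polynomials of degree `≤ n-2` with `f/g_{k+1} - f/g_k = 1` in `ℚ(x)`
for `k = 1,…,n-2`. Then there are `q ∈ ℚˣ` and `x₁ ∈ {-1,…,1-n}` such that
`f/g_k = (x - x_k)/q` with `x_k = x₁ + (1-k)q`; moreover either `q = 1` and
`x_k = -k` for all `k`, or `q = -1` and `x_k = k - n` for all `k`. -/
theorem stmt10 (n : ℕ) (hn : 3 ≤ n)
    (f : ℚ[X]) (hf : f = ∏ j ∈ Finset.Icc 1 (n - 1), (X + C (j : ℚ)))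
    (g : ℕ → ℚ[X])
    (hg0 : ∀ k ∈ Finset.Icc 1 (n - 1), g k ≠ 0)
    (hgdeg : ∀ k ∈ Finset.Icc 1 (n - 1), (g k).degree ≤ (n - 2 : ℕ))
    (hrec : ∀ k ∈ Finset.Icc 1 (n - 2),
      algebraMap ℚ[X] (RatFunc ℚ) f / algebraMap ℚ[X] (RatFunc ℚ) (g (k + 1))
        - algebraMap ℚ[X] (RatFunc ℚ) f / algebraMap ℚ[X] (RatFunc ℚ) (g k) = 1) :
    ∃ q : ℚ, q ≠ 0 ∧ ∃ x₁ : ℚ, (-(n : ℚ) + 1) ≤ x₁ ∧ x₁ ≤ -1 ∧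
      (∀ k ∈ Finset.Icc 1 (n - 1),
        algebraMap ℚ[X] (RatFunc ℚ) f / algebraMap ℚ[X] (RatFunc ℚ) (g k)
          = (RatFunc.X - RatFunc.C (x₁ + (1 - (k : ℚ)) * q)) / RatFunc.C q) ∧
      ((q = 1 ∧ ∀ k ∈ Finset.Icc 1 (n - 1), x₁ + (1 - (k : ℚ)) * q = -(k : ℚ)) ∨
       (q = -1 ∧ ∀ k ∈ Finset.Icc 1 (n - 1), x₁ + (1 - (k : ℚ)) * q = (k : ℚ) - n)) := by
  classical
  obtain ⟨p, rfl⟩ : ∃ p, n = p + 3 := ⟨n - 3, by omega⟩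
  simp only [show p + 3 - 1 = p + 2 from rfl, show p + 3 - 2 = p + 1 from rfl] at *
  -- basic facts about f
  have hfm : f.Monic := by
    rw [hf]; exact monic_prod_of_monic _ _ fun j _ => monic_X_add_C _
  have hf0 : f ≠ 0 := hfm.ne_zero
  have hfdeg : f.natDegree = p + 2 := by
    rw [hf, natDegree_prod_of_monic _ _ fun j _ => monic_X_add_C _]
    simp only [← C_eq_natCast, natDegree_X_add_C, Finset.sum_const, smul_eq_mul,
      mul_one, Nat.card_Icc]
    omega
  -- polynomial form of the recurrence
  have hrec' : ∀ k ∈ Finset.Icc 1 (p+1), f * g k = g (k+1) * (g k + f) := by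
    intro k hk
    obtain ⟨hk1, hk2⟩ := Finset.mem_Icc.mp hk
    have hmem : k ∈ Finset.Icc 1 (p+2) := by simp only [Finset.mem_Icc]; omega
    have hmem' : k+1 ∈ Finset.Icc 1 (p+2) := by simp only [Finset.mem_Icc]; omega
    have h1 := hrec k hk
    have hgk := RatFunc.algebraMap_ne_zero (hg0 k hmem)
    have hgk1 := RatFunc.algebraMap_ne_zero (hg0 (k+1) hmem')
    apply RatFunc.algebraMap_injective ℚ
    simp only [map_mul, map_add]
    field_simp at h1
    linear_combination h1
  -- the chain identity
  have chain : ∀ k, 1 ≤ k → k ≤ p+2 →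
      g k * (f + g 1 * C ((k:ℚ)-1)) = f * g 1 := by
    intro k hk1
    induction k, hk1 using Nat.le_induction with
    | base => intro _; norm_num [mul_comm]
    | succ k hk ih =>
      intro hk2
      have ihh := ih (by omega)
      have hkey := hrec' k (by simp only [Finset.mem_Icc]; omega)
      have hC : (((k+1:ℕ):ℚ) - 1) = ((k:ℚ) - 1) + 1 := by push_cast; ring
      rw [hC, map_add, map_one]
      refine mul_left_cancel₀ hf0 ?_
      linear_combination (-(f + g 1 * C ((k:ℚ)-1))) * hkey + (-(g (k+1)) + f) * ihh
  -- gcd decomposition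
  have hg1 : g 1 ≠ 0 := hg0 1 (by simp only [Finset.mem_Icc]; omega)
  set d := GCDMonoid.gcd f (g 1) with hdd
  have hd0 : d ≠ 0 := gcd_ne_zero_of_left hf0
  set F := f / d with hFF
  set G := g 1 / d with hGG
  have hF : d * F = f := EuclideanDomain.mul_div_cancel' hd0 (gcd_dvd_left f (g 1))
  have hG : d * G = g 1 := EuclideanDomain.mul_div_cancel' hd0 (gcd_dvd_right f (g 1))
  have hF0 : F ≠ 0 := left_div_gcd_ne_zero hf0
  have hG0 : G ≠ 0 := right_div_gcd_ne_zero hg1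
  have hcop : IsCoprime F G := isCoprime_div_gcd_div_gcd hg1
  -- degrees
  have hdF : d.natDegree + F.natDegree = p + 2 := by
    rw [← natDegree_mul hd0 hF0, hF, hfdeg]
  have hg1deg : (g 1).natDegree ≤ p + 1 :=
    natDegree_le_iff_degree_le.mpr (hgdeg 1 (by simp only [Finset.mem_Icc]; omega))
  have hdG : d.natDegree + G.natDegree ≤ p + 1 := by
    rw [← natDegree_mul hd0 hG0, hG]; exact hg1deg
  have hGF : G.natDegree < F.natDegree := by omega
  -- the linear factors E k
  have hEdef : ∀ k : ℕ, F + G * C ((k:ℚ)-1) = F + G * C ((k:ℚ)-1) := fun _ => rfl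
  set E : ℕ → ℚ[X] := fun k => F + G * C ((k:ℚ)-1) with hE
  have hgE : ∀ k ∈ Finset.Icc 1 (p+2), g k * E k = d * (F * G) := by
    intro k hk
    obtain ⟨hk1, hk2⟩ := Finset.mem_Icc.mp hk
    have hc := chain k hk1 hk2
    rw [← hF, ← hG] at hc
    refine mul_left_cancel₀ hd0 ?_
    simp only [hE]
    linear_combination hc
  have hdFG0 : d * (F * G) ≠ 0 := mul_ne_zero hd0 (mul_ne_zero hF0 hG0)
  have hE0 : ∀ k ∈ Finset.Icc 1 (p+2), E k ≠ 0 := by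
    intro k hk h0
    apply hdFG0; rw [← hgE k hk, h0, mul_zero]
  have hEG : ∀ k : ℕ, IsCoprime (E k) G := fun k => hcop.add_mul_left_left _
  have hpair : ∀ j k : ℕ, j ≠ k → IsCoprime (E j) (E k) := by
    intro j k hjk
    have hc0 : ((k:ℚ) - 1) - ((j:ℚ) - 1) ≠ 0 := by
      rw [sub_sub_sub_cancel_right, sub_ne_zero]
      exact fun h => hjk (by exact_mod_cast h.symm)
    have h1 : IsCoprime (E j) (G * C (((k:ℚ)-1) - ((j:ℚ)-1))) := by
      rw [isCoprime_mul_unit_right_right (isUnit_C.mpr (isUnit_iff_ne_zero.mpr hc0)) _ _]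
      exact hEG j
    have h2 := h1.add_mul_left_right 1
    have he : E k = G * C (((k:ℚ)-1) - ((j:ℚ)-1)) + E j * 1 := by
      simp only [hE, map_sub]; ring
    rwa [← he] at h2
  -- degree count forces F linear, G constant
  have hEdvd : ∀ k ∈ Finset.Icc 1 (p+2), E k ∣ d * (F * G) :=
    fun k hk => Dvd.intro_left _ (hgE k hk)
  have hprod : (∏ k ∈ Finset.Icc 1 (p+2), E k) ∣ d * (F * G) :=
    Finset.prod_dvd_of_coprime (fun j hj k hk hjk => hpair j k hjk) hEdvd
  have hEdeg : ∀ k ∈ Finset.Icc 1 (p+2), (E k).natDegree = F.natDegree := by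
    intro k hk
    have hlt : (G * C ((k:ℚ)-1)).degree < F.degree := by
      calc (G * C ((k:ℚ)-1)).degree ≤ G.degree + (C ((k:ℚ)-1)).degree := degree_mul_le _ _
        _ ≤ G.degree + 0 := add_le_add_right degree_C_le _
        _ = G.degree := add_zero _
        _ < F.degree := degree_lt_degree hGF
    exact natDegree_eq_of_degree_eq (degree_add_eq_left_of_degree_lt hlt)
  have hprodd : (∏ k ∈ Finset.Icc 1 (p+2), E k).natDegree = (p+2) * F.natDegree := by
    rw [natDegree_prod _ _ (fun k hk => hE0 k hk), Finset.sum_congr rfl hEdeg,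
      Finset.sum_const, smul_eq_mul, Nat.card_Icc]
    norm_num
  have hle : (p+2) * F.natDegree ≤ d.natDegree + (F.natDegree + G.natDegree) := by
    have h1 := natDegree_le_of_dvd hprod hdFG0
    rwa [hprodd, natDegree_mul hd0 (mul_ne_zero hF0 hG0), natDegree_mul hF0 hG0] at h1
  have hF1 : F.natDegree = 1 := by
    have e1 : (p+2) * F.natDegree = (p+1) * F.natDegree + F.natDegree := by
      rw [Nat.succ_mul]
    have e2 : (p+1) * F.natDegree ≤ (p+1) * 1 := by
      rw [mul_one]; linarith
    have := Nat.le_of_mul_le_mul_left e2 (by omega)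
    omega
  have hG0d : G.natDegree = 0 := by omega
  obtain ⟨c, hGc⟩ : ∃ c, G = C c := ⟨G.coeff 0, eq_C_of_natDegree_eq_zero hG0d⟩
  have hc0 : c ≠ 0 := fun h => hG0 (by rw [hGc, h, map_zero])
  set a := F.coeff 1 with haa
  set b := F.coeff 0 with hbb
  have hFab : F = C a * X + C b :=
    eq_X_add_C_of_degree_le_one (by rw [degree_eq_natDegree hF0, hF1]; exact_mod_cast le_rfl)
  have ha0 : a ≠ 0 := by
    have h := leadingCoeff_ne_zero.mpr hF0
    rwa [leadingCoeff, hF1] at h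
  have hq0 : c / a ≠ 0 := div_ne_zero hc0 ha0
  -- the key pointwise identity
  have hpoly : ∀ k ∈ Finset.Icc 1 (p+2),
      f * C (c/a) = g k * (X - C (-b/a + (1 - (k:ℚ)) * (c/a))) := by
    intro k hk
    have h1 : f * C c = g k * E k := by
      rw [← hF, ← hGc]
      calc d * F * G = d * (F * G) := by ring
        _ = g k * E k := (hgE k hk).symm
    refine mul_left_cancel₀ (C_ne_zero.mpr ha0) ?_
    have hax : a * (-b/a + (1 - (k:ℚ)) * (c/a)) = -(b + ((k:ℚ)-1)*c) := by
      field_simp; ring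
    have hac : a * (c/a) = c := by field_simp
    calc C a * (f * C (c/a)) = f * C (a * (c/a)) := by rw [C_mul]; ring
      _ = f * C c := by rw [hac]
      _ = g k * E k := h1
      _ = g k * (C a * X - C (a * (-b/a + (1 - (k:ℚ)) * (c/a)))) := by
          rw [hax, hE]
          simp only [hFab, hGc, map_neg, map_add, map_mul, map_sub, map_one]
          ring
      _ = C a * (g k * (X - C (-b/a + (1 - (k:ℚ)) * (c/a)))) := by rw [C_mul]; ring
  -- the RatFunc identity
  have hratfun : ∀ k ∈ Finset.Icc 1 (p+2),
      algebraMap ℚ[X] (RatFunc ℚ) f / algebraMap ℚ[X] (RatFunc ℚ) (g k)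
        = (RatFunc.X - RatFunc.C (-b/a + (1 - (k:ℚ)) * (c/a))) / RatFunc.C (c/a) := by
    intro k hk
    rw [← RatFunc.algebraMap_C (c/a), ← RatFunc.algebraMap_X,
      ← RatFunc.algebraMap_C (-b/a + (1 - (k:ℚ)) * (c/a)), ← map_sub,
      div_eq_div_iff (RatFunc.algebraMap_ne_zero (hg0 k hk))
        (RatFunc.algebraMap_ne_zero (C_ne_zero.mpr hq0)), ← map_mul, ← map_mul]
    exact congrArg _ (by linear_combination hpoly k hk)
  -- every x_k is a root of f
  have hroot : ∀ k ∈ Finset.Icc 1 (p+2), ∃ j ∈ Finset.Icc 1 (p+2),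
      -b/a + (1 - (k:ℚ)) * (c/a) = -(j:ℚ) := by
    intro k hk
    have h2 := congrArg (Polynomial.eval (-b/a + (1 - (k:ℚ)) * (c/a))) (hpoly k hk)
    simp only [eval_mul, eval_C, eval_sub, eval_X, sub_self, mul_zero] at h2
    have h3 : f.eval (-b/a + (1 - (k:ℚ)) * (c/a)) = 0 := by
      rcases mul_eq_zero.mp h2 with h | h
      · exact h
      · exact absurd h hq0
    rw [hf] at h3
    simp only [eval_prod, eval_add, eval_X, eval_C] at h3
    obtain ⟨j, hj, hj0⟩ := Finset.prod_eq_zero_iff.mp h3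
    exact ⟨j, hj, by linarith⟩
  -- bounds
  have hbound : ∀ k ∈ Finset.Icc 1 (p+2),
      (-(((p:ℚ)+3)) + 1) ≤ -b/a + (1 - (k:ℚ)) * (c/a) ∧
        -b/a + (1 - (k:ℚ)) * (c/a) ≤ -1 := by
    intro k hk
    obtain ⟨j, hj, hje⟩ := hroot k hk
    obtain ⟨hj1, hj2⟩ := Finset.mem_Icc.mp hj
    have c1 : (1:ℚ) ≤ (j:ℚ) := by exact_mod_cast hj1
    have c2 : (j:ℚ) ≤ (p:ℚ) + 2 := by exact_mod_cast hj2
    rw [hje]; constructor <;> linarith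
  have mem1 : (1:ℕ) ∈ Finset.Icc 1 (p+2) := by simp only [Finset.mem_Icc]; omega
  have mem2 : (2:ℕ) ∈ Finset.Icc 1 (p+2) := by simp only [Finset.mem_Icc]; omega
  have memN : (p+2) ∈ Finset.Icc 1 (p+2) := by simp only [Finset.mem_Icc]; omega
  obtain ⟨j1, hj1m, hj1⟩ := hroot 1 mem1
  obtain ⟨j2, hj2m, hj2⟩ := hroot 2 mem2
  have hj1' : -b/a = -(j1:ℚ) := by
    have := hj1; push_cast at this; linarith
  have hq12 : c/a = (j2:ℚ) - (j1:ℚ) := by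
    have := hj2; push_cast at this; linarith
  -- |q| ≤ 1 from the extreme bounds
  have h1b := hbound 1 mem1
  have hNb := hbound (p+2) memN
  have hX1 : -b/a + (1 - ((1:ℕ):ℚ)) * (c/a) = -b/a := by push_cast; ring
  have hXN : -b/a + (1 - (((p+2):ℕ):ℚ)) * (c/a) = -b/a - ((p:ℚ)+1) * (c/a) := by
    push_cast; ring
  rw [hX1] at h1b
  rw [hXN] at hNb
  have hup : ((p:ℚ)+1) * (c/a) ≤ (p:ℚ) + 1 := by
    have := h1b.2; have := hNb.1; linarith
  have hlo : -((p:ℚ)+1) ≤ ((p:ℚ)+1) * (c/a) := by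
    have := h1b.1; have := hNb.2; linarith
  have hp0 : (0:ℚ) ≤ (p:ℚ) := by positivity
  have hq1 : c/a = 1 ∨ c/a = -1 := by
    have hne : j1 ≠ j2 := fun h => hq0 (by rw [hq12, h, sub_self])
    rcases (by omega : j2 = j1 + 1 ∨ j1 = j2 + 1 ∨ j1 + 2 ≤ j2 ∨ j2 + 2 ≤ j1) with h | h | h | h
    · left; rw [hq12, h]; push_cast; ring
    · right; rw [hq12, h]; push_cast; ring
    · exfalso
      have hh : (j1:ℚ) + 2 ≤ (j2:ℚ) := by exact_mod_cast h
      have hq2 : (2:ℚ) ≤ c/a := by rw [hq12]; linarith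
      have hmul := mul_le_mul_of_nonneg_left hq2 (by linarith : (0:ℚ) ≤ (p:ℚ)+1)
      linarith
    · exfalso
      have hh : (j2:ℚ) + 2 ≤ (j1:ℚ) := by exact_mod_cast h
      have hq2 : c/a ≤ -2 := by rw [hq12]; linarith
      have hmul := mul_le_mul_of_nonneg_left hq2 (by linarith : (0:ℚ) ≤ (p:ℚ)+1)
      linarith
  -- conclude
  refine ⟨c/a, hq0, -b/a, ?_, ?_, hratfun, ?_⟩
  · have := h1b.1; push_cast; linarith
  · exact h1b.2
  · rcases hq1 with hq | hq
    · left
      refine ⟨hq, fun k hk => ?_⟩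
      have hB : -b/a = -1 := by
        have h1 := hNb.1
        have h2 := h1b.2
        rw [hq] at h1
        linarith
      rw [hq, hB]; ring
    · right
      refine ⟨hq, fun k hk => ?_⟩
      have hB : -b/a = -((p:ℚ)+2) := by
        have h1 := hNb.2
        have h2 := h1b.1
        rw [hq] at h1
        linarith
      rw [hq, hB]; push_cast; ring
end

section
/- Let V be a finite-dimensional complex vector space, G a finite group acting linearly on V, and ( , ) a G-invariant bilinear form on V. For u, v ∈ V define L_u : V → ℂ by L_u(x) = Σ_{g∈G} e^{(u,gx)}. If the form is symplectic (alternating, nondegenerate) and we use the induced Poisson bracket on functions, then {L_u, L_v}(x) = Σ_{g∈G} (u, gv) L_{u+gv}(x) for all u,v,x ∈ V. -/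
/-- let `V` be a finite-dimensional complex symplectic vector space,
`G ⊂ Sp(V)` finite, and `L_u(x) = Σ_{g∈G} e^{(u,gx)}`. With the Poisson bracket of
smooth functions induced by the symplectic form (via the musical isomorphism `J`
inverse to `α ↦ ω(·,—)`), one has `{L_u, L_v}(x) = Σ_{g∈G} (u,gv) L_{u+gv}(x)`. -/
theorem stmt16 (V : Type*) [NormedAddCommGroup V] [NormedSpace ℂ V]
    [FiniteDimensional ℂ V]
    (ω : V →ₗ[ℂ] V →ₗ[ℂ] ℂ) (halt : ∀ v, ω v v = 0)
    (hnd : ∀ u : V, (∀ v : V, ω u v = 0) → u = 0)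
    (G : Type*) [Group G] [Fintype G] (ρ : G →* (V ≃ₗ[ℂ] V))
    (hinv : ∀ g u v, ω (ρ g u) (ρ g v) = ω u v)
    (J : (V →L[ℂ] ℂ) → V) (hJ : ∀ (α : V →L[ℂ] ℂ) (v : V), ω (J α) v = α v)
    (L : V → V → ℂ) (hL : ∀ u x, L u x = ∑ g : G, Complex.exp (ω u (ρ g x)))
    (Pb : (V → ℂ) → (V → ℂ) → V → ℂ)
    (hPb : ∀ (F₁ F₂ : V → ℂ) (x : V),
      Pb F₁ F₂ x = ω (J (fderiv ℂ F₁ x)) (J (fderiv ℂ F₂ x))) :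
    ∀ u v x : V, Pb (L u) (L v) x = ∑ g : G, ω u (ρ g v) * L (u + ρ g v) x := by
  intro u v x
  -- skew-symmetry
  have hskew : ∀ a b : V, ω a b = - ω b a := by
    intro a b
    have h := halt (a + b)
    simp only [map_add, LinearMap.add_apply, halt a, halt b, zero_add, add_zero] at h
    linear_combination h
  -- invariance in shifted form
  have hmove : ∀ (g : G) (a b : V), ω a (ρ g b) = ω (ρ g⁻¹ a) b := by
    intro g a b
    rw [← hinv g (ρ g⁻¹ a) b]
    congr 1
    have : (ρ g) ((ρ g⁻¹) a) = (ρ g * ρ g⁻¹) a := rfl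
    rw [this, ← map_mul, mul_inv_cancel, map_one]
    rfl
  have hmove' : ∀ (g : G) (a b : V), ω (ρ g a) b = ω a (ρ g⁻¹ b) := by
    intro g a b
    rw [hmove g⁻¹, inv_inv]
  -- the continuous linear differentials
  set lc : V → G → (V →L[ℂ] ℂ) := fun w g =>
    LinearMap.toContinuousLinearMap ((ω w).comp ((ρ g : V ≃ₗ[ℂ] V) : V →ₗ[ℂ] V))
    with hlc
  have hlcapp : ∀ (w : V) (g : G) (y : V), lc w g y = ω w (ρ g y) := fun _ _ _ => rfl
  have hd : ∀ w : V, HasFDerivAt (L w)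
      (∑ g : G, Complex.exp (ω w (ρ g x)) • lc w g) x := by
    intro w
    have hfun : L w = fun y => ∑ g : G, Complex.exp (ω w (ρ g y)) := funext (hL w)
    rw [hfun]
    apply HasFDerivAt.fun_sum
    intro g _
    have h1 : HasFDerivAt (fun y => (ω w) ((ρ g) y)) (lc w g) x := (lc w g).hasFDerivAt
    exact h1.cexp
  have hdu := (hd u).fderiv
  have hdv := (hd v).fderiv
  rw [hPb, hJ, hdu, hdv]
  set β : V := J (∑ g : G, Complex.exp (ω v (ρ g x)) • lc v g) with hβ
  have hβeval : ∀ a : V, ω β a = ∑ h : G, Complex.exp (ω v (ρ h x)) * ω v (ρ h a) := by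
    intro a
    rw [hβ, hJ]
    simp [ContinuousLinearMap.sum_apply, ContinuousLinearMap.smul_apply, hlcapp,
      smul_eq_mul]
  -- LHS as a double sum
  have hLHS : (∑ g : G, Complex.exp (ω u (ρ g x)) • lc u g) β
      = ∑ g : G, ∑ h : G, Complex.exp (ω u (ρ g x)) * Complex.exp (ω v (ρ h x))
        * ω u (ρ (g * h⁻¹) v) := by
    simp only [ContinuousLinearMap.sum_apply, ContinuousLinearMap.smul_apply, hlcapp,
      smul_eq_mul]
    refine Finset.sum_congr rfl fun g _ => ?_
    have h1 : ω u (ρ g β) = - ω β (ρ g⁻¹ u) := by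
      rw [hmove g u β, hskew]
    rw [h1, hβeval, ← Finset.sum_neg_distrib, Finset.mul_sum]
    refine Finset.sum_congr rfl fun h _ => ?_
    have h2 : ω v (ρ h (ρ g⁻¹ u)) = ω v (ρ (h * g⁻¹) u) := by
      rw [map_mul]; rfl
    have h3 : ω u (ρ (g * h⁻¹) v) = - ω v (ρ (h * g⁻¹) u) := by
      rw [hskew u, hmove' (g * h⁻¹), mul_inv_rev, inv_inv]
    rw [h2, h3]
    ring
  rw [hLHS]
  -- RHS as a double sum and reindexing
  have hRHS : ∀ g : G, ω u (ρ g v) * L (u + ρ g v) x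
      = ∑ h : G, ω u (ρ g v) * (Complex.exp (ω u (ρ h x))
          * Complex.exp (ω (ρ g v) (ρ h x))) := by
    intro g
    rw [hL, Finset.mul_sum]
    refine Finset.sum_congr rfl fun h _ => ?_
    rw [map_add, LinearMap.add_apply, Complex.exp_add]
  simp only [hRHS]
  conv_rhs => rw [Finset.sum_comm]
  refine Finset.sum_congr rfl fun g _ => ?_
  refine Fintype.sum_equiv ((Equiv.inv G).trans (Equiv.mulLeft g)) _ _ fun h => ?_
  simp only [Equiv.trans_apply, Equiv.inv_apply, Equiv.coe_mulLeft]
  have h4 : ω (ρ (g * h⁻¹) v) (ρ g x) = ω v (ρ h x) := by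
    rw [hmove' (g * h⁻¹), mul_inv_rev, inv_inv, map_mul]
    have : (ρ h * ρ g⁻¹) ((ρ g) x) = (ρ h) ((ρ g⁻¹) ((ρ g) x)) := rfl
    rw [this]
    congr 1
    have h5 : (ρ g⁻¹) ((ρ g) x) = (ρ g⁻¹ * ρ g) x := rfl
    rw [h5, ← map_mul, inv_mul_cancel, map_one]; rfl
  rw [h4]
  ring
end
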